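/- Let d ≥ 2 and let 1 ≤ a ≤ b < d be integers. Then the polynomial D(t) = ((1-t^{3d-3-a-b})/(1-t)) · ((1-t^a)/(1-t)) · ((1-t^b)/(1-t)) has a nonnegative, log-concave coefficient sequence with no internal zeros, and hence is unimodal. -/

import Mathlib

open Polynomial

section AuxLC

open Finset

/-- Coefficients of a real polynomial, extended by `0` to negative integer indices. -/
noncomputable def zcAux (P : Polynomial ℝ) : ℤ → ℝ :=
  fun n => if 0 ≤ n then P.coeff n.toNat else 0

/-- A `ℤ`-indexed sequence is `PF₂`: nonnegative and (strongly) log-concave.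
For sequences arising from polynomials this is equivalent to: nonnegative, log-concave,
and no internal zeros. -/
def LC2Aux (f : ℤ → ℝ) : Prop :=
  (∀ n, 0 ≤ f n) ∧ ∀ u v : ℤ, u ≤ v → f (u-1) * f (v+1) ≤ f u * f v

lemma zcAux_neg (P : Polynomial ℝ) {n : ℤ} (hn : n < 0) : zcAux P n = 0 := by
  simp [zcAux, not_le.mpr hn]

lemma zcAux_coe (P : Polynomial ℝ) (k : ℕ) : zcAux P (k : ℤ) = P.coeff k := by
  simp [zcAux]

lemma geom_coeff (m k : ℕ) :
    (∑ i ∈ Finset.range m, (X : Polynomial ℝ) ^ i).coeff k = if k < m then 1 else 0 := by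
  rw [Polynomial.finset_sum_coeff]
  simp [Polynomial.coeff_X_pow, Finset.sum_ite_eq', Finset.mem_range]

lemma zcAux_geom (m : ℕ) (n : ℤ) :
    zcAux (∑ i ∈ Finset.range m, (X : Polynomial ℝ) ^ i) n
      = if 0 ≤ n ∧ n < m then 1 else 0 := by
  unfold zcAux
  split_ifs with h1 h2 h2
  · rw [geom_coeff]; split_ifs with h3 <;> [rfl; omega]
  · rw [geom_coeff]; split_ifs with h3 <;> [omega; rfl]
  · exact absurd h2.1 h1
  · rfl

lemma LC2Aux_geom (m : ℕ) :
    LC2Aux (zcAux (∑ i ∈ Finset.range m, (X : Polynomial ℝ) ^ i)) := by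
  constructor
  · intro n; rw [zcAux_geom]; split_ifs <;> norm_num
  · intro u v huv
    rw [zcAux_geom, zcAux_geom, zcAux_geom, zcAux_geom]
    split_ifs <;> norm_num <;> omega

lemma spread1 {f : ℤ → ℝ} (hf : LC2Aux f) {p q : ℤ} (hpq : p ≤ q) (k : ℕ) :
    f (p - k) * f (q + k) ≤ f p * f q := by
  induction k with
  | zero => simp
  | succ k ih =>
    have h1 := hf.2 (p - k) (q + k) (by omega)
    have e1 : p - ((k:ℕ)+1 : ℕ) = (p - (k:ℤ)) - 1 := by push_cast; ring
    have e2 : q + ((k:ℕ)+1 : ℕ) = (q + (k:ℤ)) + 1 := by push_cast; ring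
    rw [e1, e2]
    exact le_trans h1 ih

lemma spread2 {f : ℤ → ℝ} (hf : LC2Aux f) {p q : ℤ} (k : ℕ) (h1 : p - k ≤ q) (h2 : p ≤ q + k) :
    f (p - k) * f (q + k) ≤ f p * f q := by
  rcases le_total p q with h | h
  · exact spread1 hf h k
  · have h3 : (0:ℤ) ≤ q - p + k := by omega
    have hk : (((q - p + k).toNat : ℤ)) = q - p + k := Int.toNat_of_nonneg h3
    have h4 := spread1 hf h ((q - p + k).toNat)
    have e1 : q - ((q - p + k).toNat : ℤ) = p - k := by omega
    have e2 : p + ((q - p + k).toNat : ℤ) = q + k := by omega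
    rw [e1, e2] at h4
    calc f (p - k) * f (q + k) ≤ f q * f p := h4
    _ = f p * f q := mul_comm _ _

lemma LC2Aux_ne_zero {f : ℤ → ℝ} (hf : LC2Aux f) {i j l : ℤ} (hij : i ≤ j) (hjl : j ≤ l)
    (hi : f i ≠ 0) (hl : f l ≠ 0) : f j ≠ 0 := by
  have hk : (((j - i).toNat : ℤ)) = j - i := Int.toNat_of_nonneg (by omega)
  have h4 := spread2 hf (p := j) (q := i + l - j) ((j - i).toNat) (by omega) (by omega)
  have e1 : j - ((j - i).toNat : ℤ) = i := by omega
  have e2 : i + l - j + ((j - i).toNat : ℤ) = l := by omega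
  rw [e1, e2] at h4
  have hpos : 0 < f i * f l :=
    mul_pos ((hf.1 i).lt_of_ne (Ne.symm hi)) ((hf.1 l).lt_of_ne (Ne.symm hl))
  intro h
  rw [h, zero_mul] at h4
  linarith

/-- The key 2×2 Cauchy–Binet inequality for convolutions of PF₂ sequences. -/
lemma key_ineq {f g : ℤ → ℝ} (hf : LC2Aux f) (hg : LC2Aux g) (u v : ℤ) (huv : u ≤ v)
    (T : Finset ℤ) :
    (∑ s ∈ T, f (s-1) * g (u-s)) * (∑ t ∈ T, f t * g (v+1-t))
      ≤ (∑ t ∈ T, f t * g (u - t)) * (∑ s ∈ T, f (s-1) * g (v+1-s)) := by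
  have hA : ∀ t s : ℤ, t ≤ s → f s * f (t-1) ≤ f t * f (s-1) := by
    intro t s h
    rcases eq_or_lt_of_le h with rfl | h'
    · exact le_rfl
    · have h2 := hf.2 t (s-1) (by omega)
      have e : s - 1 + 1 = s := by ring
      rw [e] at h2
      calc f s * f (t-1) = f (t-1) * f s := mul_comm _ _
      _ ≤ f t * f (s-1) := h2
  have hB : ∀ t s : ℤ, t ≤ s → g (u-s) * g (v+1-t) ≤ g (u-t) * g (v+1-s) := by
    intro t s h
    have hk : (((s - t).toNat : ℤ)) = s - t := Int.toNat_of_nonneg (by omega)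
    have h4 := spread2 hg (p := u - t) (q := v + 1 - s) ((s - t).toNat) (by omega) (by omega)
    have e1 : u - t - ((s - t).toNat : ℤ) = u - s := by omega
    have e2 : v + 1 - s + ((s - t).toNat : ℤ) = v + 1 - t := by omega
    rw [e1, e2] at h4
    exact h4
  have hG : ∀ t s : ℤ,
      0 ≤ (f t * f (s-1) - f s * f (t-1)) * (g (u-t) * g (v+1-s) - g (u-s) * g (v+1-t)) := by
    intro t s
    rcases le_total t s with h | h
    · exact mul_nonneg (sub_nonneg.2 (hA t s h)) (sub_nonneg.2 (hB t s h))
    · have h5 := mul_nonneg (sub_nonneg.2 (hA s t h)) (sub_nonneg.2 (hB s t h))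
      have e : (f s * f (t-1) - f t * f (s-1)) * (g (u-s) * g (v+1-t) - g (u-t) * g (v+1-s))
          = (f t * f (s-1) - f s * f (t-1)) * (g (u-t) * g (v+1-s) - g (u-s) * g (v+1-t)) := by
        ring
      rw [e] at h5
      exact h5
  set S : ℝ := ∑ t ∈ T, ∑ s ∈ T,
      (f t * f (s-1)) * (g (u-t) * g (v+1-s) - g (u-s) * g (v+1-t)) with hS
  have hswap : S = ∑ t ∈ T, ∑ s ∈ T,
      (f s * f (t-1)) * (g (u-s) * g (v+1-t) - g (u-t) * g (v+1-s)) := by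
    rw [hS]; exact Finset.sum_comm
  have h2S : 2 * S = ∑ t ∈ T, ∑ s ∈ T,
      (f t * f (s-1) - f s * f (t-1)) * (g (u-t) * g (v+1-s) - g (u-s) * g (v+1-t)) := by
    calc 2 * S = S + S := by ring
    _ = _ := by
      nth_rewrite 2 [hswap]
      rw [hS, ← Finset.sum_add_distrib]
      refine Finset.sum_congr rfl fun t _ => ?_
      rw [← Finset.sum_add_distrib]
      exact Finset.sum_congr rfl fun s _ => by ring
  have hSnn : 0 ≤ S := by
    have h6 : 0 ≤ 2 * S := by
      rw [h2S]
      exact Finset.sum_nonneg fun t _ => Finset.sum_nonneg fun s _ => hG t s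
    linarith
  have expand : (∑ t ∈ T, f t * g (u - t)) * (∑ s ∈ T, f (s-1) * g (v+1-s))
      - (∑ s ∈ T, f (s-1) * g (u-s)) * (∑ t ∈ T, f t * g (v+1-t)) = S := by
    rw [hS, Finset.sum_mul_sum, Finset.sum_mul_sum]
    rw [show (∑ s ∈ T, ∑ t ∈ T, (f (s-1) * g (u-s)) * (f t * g (v+1-t)))
        = ∑ t ∈ T, ∑ s ∈ T, (f (s-1) * g (u-s)) * (f t * g (v+1-t)) from Finset.sum_comm]
    rw [← Finset.sum_sub_distrib]
    refine Finset.sum_congr rfl fun t _ => ?_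
    rw [← Finset.sum_sub_distrib]
    exact Finset.sum_congr rfl fun s _ => by ring
  linarith

lemma zcAux_mul (P Q : Polynomial ℝ) (n L M : ℤ) (hL : L ≤ 0) (hM : n ≤ M) :
    zcAux (P * Q) n = ∑ t ∈ Finset.Icc L M, zcAux P t * zcAux Q (n - t) := by
  rcases lt_or_ge n 0 with hn | hn
  · rw [zcAux_neg _ hn]
    symm
    apply Finset.sum_eq_zero
    intro t ht
    rcases lt_or_ge t 0 with h | h
    · rw [zcAux_neg _ h, zero_mul]
    · rw [zcAux_neg Q (by omega), mul_zero]
  · have hsub : Finset.Icc (0:ℤ) n ⊆ Finset.Icc L M := Finset.Icc_subset_Icc hL hM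
    rw [← Finset.sum_subset hsub (by
      intro t ht hnt
      simp only [Finset.mem_Icc] at ht hnt
      rcases lt_or_ge t 0 with h | h
      · rw [zcAux_neg _ h, zero_mul]
      · rw [zcAux_neg Q (by omega), mul_zero])]
    have hz : zcAux (P * Q) n = (P * Q).coeff n.toNat := by simp [zcAux, hn]
    rw [hz, Polynomial.coeff_mul, Finset.Nat.sum_antidiagonal_eq_sum_range_succ_mk]
    refine (Finset.sum_nbij' (fun (t : ℤ) => t.toNat) (fun (k : ℕ) => (k : ℤ)) ?_ ?_ ?_ ?_ ?_).symm
    · intro t ht; simp only [Finset.mem_Icc] at ht; simp only [Finset.mem_range]; omega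
    · intro k hk; simp only [Finset.mem_range] at hk; simp only [Finset.mem_Icc]; omega
    · intro t ht; simp only [Finset.mem_Icc] at ht; show ((t.toNat : ℤ)) = t; omega
    · intro k hk; simp
    · intro t ht
      simp only [Finset.mem_Icc] at ht
      have h1 : zcAux P t = P.coeff t.toNat := by simp [zcAux, ht.1]
      have h2 : zcAux Q (n - t) = Q.coeff (n.toNat - t.toNat) := by
        have h3 : (0:ℤ) ≤ n - t := by omega
        have e : (n - t).toNat = n.toNat - t.toNat := by omega
        simp [zcAux, h3, e, ht.2]
      rw [h1, h2]

lemma sum_shift_aux (F : ℤ → ℝ) (a b : ℤ) :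
    ∑ s ∈ Finset.Icc a b, F (s - 1) = ∑ t ∈ Finset.Icc (a-1) (b-1), F t := by
  refine Finset.sum_nbij' (fun s => s - 1) (fun t => t + 1) ?_ ?_ ?_ ?_ ?_ <;>
    intros <;> simp_all [Finset.mem_Icc] <;> omega

lemma LC2Aux_mul {P Q : Polynomial ℝ} (hP : LC2Aux (zcAux P)) (hQ : LC2Aux (zcAux Q)) :
    LC2Aux (zcAux (P * Q)) := by
  constructor
  · intro n
    rw [zcAux_mul P Q n 0 (max n 0) le_rfl (le_max_left _ _)]
    exact Finset.sum_nonneg fun t _ => mul_nonneg (hP.1 t) (hQ.1 _)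
  · intro u v huv
    have hcu : zcAux (P*Q) u = ∑ t ∈ Finset.Icc (0:ℤ) (v+1), zcAux P t * zcAux Q (u - t) :=
      zcAux_mul P Q u 0 (v+1) le_rfl (by omega)
    have hcv1 : zcAux (P*Q) (v+1)
        = ∑ t ∈ Finset.Icc (0:ℤ) (v+1), zcAux P t * zcAux Q (v + 1 - t) :=
      zcAux_mul P Q (v+1) 0 (v+1) le_rfl le_rfl
    have hcv : zcAux (P*Q) v
        = ∑ s ∈ Finset.Icc (0:ℤ) (v+1), zcAux P (s-1) * zcAux Q (v + 1 - s) := by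
      rw [zcAux_mul P Q v (0-1) ((v+1)-1) (by omega) (by omega)]
      rw [← sum_shift_aux (fun t => zcAux P t * zcAux Q (v - t)) 0 (v+1)]
      exact Finset.sum_congr rfl fun s _ => by rw [show v - (s-1) = v + 1 - s by ring]
    have hcu1 : zcAux (P*Q) (u-1)
        = ∑ s ∈ Finset.Icc (0:ℤ) (v+1), zcAux P (s-1) * zcAux Q (u - s) := by
      rw [zcAux_mul P Q (u-1) (0-1) ((v+1)-1) (by omega) (by omega)]
      rw [← sum_shift_aux (fun t => zcAux P t * zcAux Q (u - 1 - t)) 0 (v+1)]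
      exact Finset.sum_congr rfl fun s _ => by rw [show u - 1 - (s-1) = u - s by ring]
    rw [hcu, hcv, hcu1, hcv1]
    exact key_ineq hP hQ u v huv _

lemma unimodal_aux (g : ℕ → ℝ) (h0 : ∀ k, 0 ≤ g k)
    (hlc : ∀ k, g k * g (k+2) ≤ g (k+1) * g (k+1))
    (hdown : ∀ j, g (j+1) ≠ 0 → g j ≠ 0)
    (hN : ∃ N, g (N+1) ≤ g N) :
    ∃ i, (∀ j, j < i → g j ≤ g (j+1)) ∧ (∀ j, i ≤ j → g (j+1) ≤ g j) := by
  classical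
  refine ⟨Nat.find hN, fun j hj => ?_, fun j hj => ?_⟩
  · exact le_of_lt (not_le.mp (Nat.find_min hN hj))
  · induction j, hj using Nat.le_induction with
    | base => exact Nat.find_spec hN
    | succ n hn ih =>
      by_cases hy : g (n+1) = 0
      · by_cases hz2 : g (n+2) = 0
        · rw [hz2, hy]
        · exact absurd (hdown (n+1) hz2) (by simpa using hy)
      · have hy' : 0 < g (n+1) := (h0 _).lt_of_ne (Ne.symm hy)
        have hx : 0 < g n := lt_of_lt_of_le hy' ih
        nlinarith [hlc n]

end AuxLC
theorem stmt19 (a b d : ℕ) (hd : 2 ≤ d) (ha : 1 ≤ a) (hab : a ≤ b) (hbd : b < d) :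
    (∀ k, 0 ≤ ((∑ i ∈ Finset.range (3 * d - 3 - a - b), (X : Polynomial ℝ) ^ i)
        * (∑ i ∈ Finset.range a, (X : Polynomial ℝ) ^ i)
        * (∑ i ∈ Finset.range b, (X : Polynomial ℝ) ^ i)).coeff k) ∧
    (∀ k, 1 ≤ k →
      ((∑ i ∈ Finset.range (3 * d - 3 - a - b), (X : Polynomial ℝ) ^ i)
          * (∑ i ∈ Finset.range a, (X : Polynomial ℝ) ^ i)
          * (∑ i ∈ Finset.range b, (X : Polynomial ℝ) ^ i)).coeff (k - 1)
        * ((∑ i ∈ Finset.range (3 * d - 3 - a - b), (X : Polynomial ℝ) ^ i)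
          * (∑ i ∈ Finset.range a, (X : Polynomial ℝ) ^ i)
          * (∑ i ∈ Finset.range b, (X : Polynomial ℝ) ^ i)).coeff (k + 1)
      ≤ (((∑ i ∈ Finset.range (3 * d - 3 - a - b), (X : Polynomial ℝ) ^ i)
          * (∑ i ∈ Finset.range a, (X : Polynomial ℝ) ^ i)
          * (∑ i ∈ Finset.range b, (X : Polynomial ℝ) ^ i)).coeff k) ^ 2) ∧
    (∀ i j l, i ≤ j → j ≤ l →
      ((∑ i ∈ Finset.range (3 * d - 3 - a - b), (X : Polynomial ℝ) ^ i)
          * (∑ i ∈ Finset.range a, (X : Polynomial ℝ) ^ i)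
          * (∑ i ∈ Finset.range b, (X : Polynomial ℝ) ^ i)).coeff i ≠ 0 →
      ((∑ i ∈ Finset.range (3 * d - 3 - a - b), (X : Polynomial ℝ) ^ i)
          * (∑ i ∈ Finset.range a, (X : Polynomial ℝ) ^ i)
          * (∑ i ∈ Finset.range b, (X : Polynomial ℝ) ^ i)).coeff l ≠ 0 →
      ((∑ i ∈ Finset.range (3 * d - 3 - a - b), (X : Polynomial ℝ) ^ i)
          * (∑ i ∈ Finset.range a, (X : Polynomial ℝ) ^ i)
          * (∑ i ∈ Finset.range b, (X : Polynomial ℝ) ^ i)).coeff j ≠ 0) ∧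
    (∃ i : ℕ, (∀ j, j < i →
        ((∑ i ∈ Finset.range (3 * d - 3 - a - b), (X : Polynomial ℝ) ^ i)
          * (∑ i ∈ Finset.range a, (X : Polynomial ℝ) ^ i)
          * (∑ i ∈ Finset.range b, (X : Polynomial ℝ) ^ i)).coeff j
        ≤ ((∑ i ∈ Finset.range (3 * d - 3 - a - b), (X : Polynomial ℝ) ^ i)
          * (∑ i ∈ Finset.range a, (X : Polynomial ℝ) ^ i)
          * (∑ i ∈ Finset.range b, (X : Polynomial ℝ) ^ i)).coeff (j + 1)) ∧
      (∀ j, i ≤ j →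
        ((∑ i ∈ Finset.range (3 * d - 3 - a - b), (X : Polynomial ℝ) ^ i)
          * (∑ i ∈ Finset.range a, (X : Polynomial ℝ) ^ i)
          * (∑ i ∈ Finset.range b, (X : Polynomial ℝ) ^ i)).coeff (j + 1)
        ≤ ((∑ i ∈ Finset.range (3 * d - 3 - a - b), (X : Polynomial ℝ) ^ i)
          * (∑ i ∈ Finset.range a, (X : Polynomial ℝ) ^ i)
          * (∑ i ∈ Finset.range b, (X : Polynomial ℝ) ^ i)).coeff j)) := by
  have hM1 : 1 ≤ 3 * d - 3 - a - b := by omega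
  set D : Polynomial ℝ := (∑ i ∈ Finset.range (3 * d - 3 - a - b), (X : Polynomial ℝ) ^ i)
      * (∑ i ∈ Finset.range a, (X : Polynomial ℝ) ^ i)
      * (∑ i ∈ Finset.range b, (X : Polynomial ℝ) ^ i) with hD
  have lc : LC2Aux (zcAux D) := by
    rw [hD]
    exact LC2Aux_mul (LC2Aux_mul (LC2Aux_geom _) (LC2Aux_geom _)) (LC2Aux_geom _)
  have hnn : ∀ k : ℕ, 0 ≤ D.coeff k := fun k => by
    have h := lc.1 (k : ℤ); rwa [zcAux_coe] at h
  have hlc2 : ∀ k : ℕ, D.coeff k * D.coeff (k+2) ≤ D.coeff (k+1) * D.coeff (k+1) := by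
    intro k
    have h := lc.2 ((k:ℤ)+1) ((k:ℤ)+1) le_rfl
    have e1 : (k:ℤ)+1-1 = ((k:ℕ):ℤ) := by ring
    have e2 : (k:ℤ)+1+1 = ((k+2:ℕ):ℤ) := by push_cast; ring
    have e3 : (k:ℤ)+1 = ((k+1:ℕ):ℤ) := by push_cast; ring
    rw [e1, e2, e3] at h
    simp only [zcAux_coe] at h
    exact h
  have hne : ∀ i j l : ℕ, i ≤ j → j ≤ l → D.coeff i ≠ 0 → D.coeff l ≠ 0 → D.coeff j ≠ 0 := by
    intro i j l hij hjl hi hl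
    have h := LC2Aux_ne_zero lc (i := (i:ℤ)) (j := (j:ℤ)) (l := (l:ℤ))
      (by exact_mod_cast hij) (by exact_mod_cast hjl)
      (by rwa [zcAux_coe]) (by rwa [zcAux_coe])
    rwa [zcAux_coe] at h
  have h00 : D.coeff 0 = 1 := by
    simp only [hD, Polynomial.mul_coeff_zero, geom_coeff]
    rw [if_pos (by omega), if_pos (by omega), if_pos (by omega)]
    norm_num
  refine ⟨fun k => hnn k, ?_, fun i j l hij hjl hi hl => hne i j l hij hjl hi hl, ?_⟩
  · intro k hk
    have h := lc.2 (k:ℤ) (k:ℤ) le_rfl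
    have e1 : (k:ℤ)-1 = ((k-1:ℕ):ℤ) := by omega
    have e2 : (k:ℤ)+1 = ((k+1:ℕ):ℤ) := by push_cast; ring
    rw [e1, e2] at h
    simp only [zcAux_coe] at h
    rw [pow_two]
    exact h
  · have hdown : ∀ j : ℕ, D.coeff (j+1) ≠ 0 → D.coeff j ≠ 0 := by
      intro j hj1
      exact hne 0 j (j+1) (Nat.zero_le _) (Nat.le_succ _) (by rw [h00]; norm_num) hj1
    have hN : ∃ N : ℕ, D.coeff (N+1) ≤ D.coeff N := by
      refine ⟨D.natDegree, ?_⟩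
      rw [Polynomial.coeff_natDegree_succ_eq_zero]
      exact hnn _
    exact unimodal_aux (fun k => D.coeff k) hnn hlc2 hdown hN
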